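/- Let f, h be polynomials over ℂ with f ≠ 0 satisfying h'·f − h·f' = f. Then there exist c ∈ ℂ and a polynomial h₁ = h − c·f with deg(h₁) ≤ 1. -/

import Mathlib

open Polynomial

lemma key_natDegree_le_one (f g : Polynomial ℂ) (hf : f ≠ 0) (hg : g ≠ 0)
    (hne : g.natDegree ≠ f.natDegree)
    (hrel : Polynomial.derivative g * f - g * Polynomial.derivative f = f) :
    g.natDegree ≤ 1 := by
  by_contra hcon
  push_neg at hcon
  set m := g.natDegree with hm
  set n := f.natDegree with hn
  have hm1 : 1 ≤ m := by omega
  have ha : g.coeff m ≠ 0 := mt leadingCoeff_eq_zero.mp hg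
  have hb : f.coeff n ≠ 0 := mt leadingCoeff_eq_zero.mp hf
  -- coefficient of g' * f at (m-1) + n
  have h1 : (Polynomial.derivative g * f).coeff ((m - 1) + n)
      = g.coeff m * m * f.coeff n := by
    rw [coeff_mul_add_eq_of_natDegree_le (natDegree_derivative_le g) le_rfl,
      coeff_derivative]
    have : m - 1 + 1 = m := by omega
    rw [this, Nat.cast_sub hm1]
    push_cast
    ring
  -- coefficient of g * f' at (m-1) + n
  have h2 : (g * Polynomial.derivative f).coeff ((m - 1) + n)
      = g.coeff m * n * f.coeff n := by
    rcases Nat.eq_zero_or_pos n with h0 | hpos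
    · have : Polynomial.derivative f = 0 := derivative_of_natDegree_zero h0
      simp [this, h0]
    · have heq : (m - 1) + n = m + (n - 1) := by omega
      rw [heq, coeff_mul_add_eq_of_natDegree_le le_rfl (natDegree_derivative_le f),
        coeff_derivative]
      have : n - 1 + 1 = n := by omega
      rw [this, Nat.cast_sub hpos]
      push_cast
      ring
  have h3 : f.coeff ((m - 1) + n) = 0 := by
    apply coeff_eq_zero_of_natDegree_lt
    omega
  have := congrArg (fun p => p.coeff ((m - 1) + n)) hrel
  simp only [coeff_sub, h1, h2, h3] at this
  have hmn : ((m : ℂ) - n) * (g.coeff m * f.coeff n) = 0 := by ring_nf; linear_combination this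
  rcases mul_eq_zero.mp hmn with h | h
  · exact hne (Nat.cast_injective (sub_eq_zero.mp h))
  · exact (mul_ne_zero ha hb) h

theorem exists_shift_of_degree_le_one (f h : Polynomial ℂ) (hf : f ≠ 0)
    (hrel : Polynomial.derivative h * f - h * Polynomial.derivative f = f) :
    ∃ c : ℂ, (h - Polynomial.C c * f).degree ≤ 1 := by
  by_cases hh : h = 0
  · exfalso; apply hf; rw [← hrel, hh]; simp
  by_cases hd : h.natDegree = f.natDegree
  · -- subtract leading coefficient multiple
    set c := h.leadingCoeff / f.leadingCoeff with hc
    refine ⟨c, ?_⟩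
    set g := h - Polynomial.C c * f with hgdef
    by_cases hg0 : g = 0
    · rw [hg0]; simp
    have hrel2 : Polynomial.derivative g * f - g * Polynomial.derivative f = f := by
      rw [hgdef]
      simp only [derivative_sub, derivative_C_mul]
      ring_nf
      ring_nf at hrel
      linear_combination hrel
    have hdeglt : g.natDegree < f.natDegree ∨ g.natDegree ≠ f.natDegree := by
      left
      have hcne : f.leadingCoeff ≠ 0 := leadingCoeff_ne_zero.mpr hf
      have hlead : g.coeff f.natDegree = 0 := by
        rw [hgdef]
        simp only [coeff_sub, coeff_C_mul]
        rw [← hd, coeff_natDegree, hd, coeff_natDegree, hc]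
        field_simp
        simp
      have : g.natDegree ≠ f.natDegree := by
        intro he
        apply leadingCoeff_ne_zero.mpr hg0
        rw [leadingCoeff, he, hlead]
      have hle : g.natDegree ≤ f.natDegree := by
        rw [hgdef]
        refine (natDegree_sub_le _ _).trans (max_le hd.le (natDegree_C_mul_le _ _))
      omega
    have : g.natDegree ≤ 1 := by
      apply key_natDegree_le_one f g hf hg0 _ hrel2
      rcases hdeglt with h | h
      · omega
      · exact h
    calc g.degree ≤ g.natDegree := degree_le_natDegree
      _ ≤ 1 := by exact_mod_cast this
  · refine ⟨0, ?_⟩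
    have : h.natDegree ≤ 1 := key_natDegree_le_one f h hf hh hd hrel
    simp only [map_zero, zero_mul, sub_zero]
    calc h.degree ≤ h.natDegree := degree_le_natDegree
      _ ≤ 1 := by exact_mod_cast this
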